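/- Let H be a primitive and aperiodic substitution over a finite alphabet A. Let x ∈ A^ℕ \ K with δ(x) = d, and suppose the first accident of x occurs at time b with 0 < b ≤ d. Then the word x_b x_{b+1} ⋯ x_{d−1} is a bispecial word of L_H. -/

import Mathlib

open Filter Topology MeasureTheory

variable {A : Type*}

/-- The shift map on infinite words. -/
def shift (x : ℕ → A) : ℕ → A := fun n => x (n + 1)

/-- Image of a finite word under a substitution. -/
def wordMap (H : A → List A) (w : List A) : List A := w.flatMap H

/-- Image of an infinite word under a substitution (each `H a` nonempty makes this the
infinite concatenation `H(x₀)H(x₁)⋯`). -/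
def substSeq (H : A → List A) (x : ℕ → A) : ℕ → A :=
  fun n => (wordMap H ((List.range (n + 1)).map x)).getD n (x 0)

/-- The prefix of length `n` of an infinite word. -/
def prefixWord (x : ℕ → A) (n : ℕ) : List A := (List.range n).map x

/-- The factor of length `n` at position `i` of an infinite word. -/
def factorAt (x : ℕ → A) (i n : ℕ) : List A := (List.range n).map fun j => x (i + j)

/-- The language of an infinite word: the set of its finite factors. -/
def Lang (u : ℕ → A) : Set (List A) := {w | ∃ i, w = factorAt u i w.length}

/-- A sequence is (purely) periodic for the shift. -/
def PeriodicSeq (x : ℕ → A) : Prop := ∃ m, 0 < m ∧ ∀ n, x (n + m) = x n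

/-- `u` is a fixed point of the substitution `H`. -/
def IsFixedPointSubst (H : A → List A) (u : ℕ → A) : Prop := substSeq H u = u

/-- `H` is primitive: some power of `H` maps every letter onto a word containing
every letter. -/
def PrimitiveSubst (H : A → List A) : Prop :=
  ∃ k, 0 < k ∧ ∀ a b : A, b ∈ (wordMap H)^[k] [a]

/-- `H` is aperiodic: no fixed point of `H` is periodic for the shift. -/
def AperiodicSubst (H : A → List A) : Prop :=
  ∀ u : ℕ → A, IsFixedPointSubst H u → ¬ PeriodicSeq u

/-- `H` is marked: first letters of images are pairwise distinct, and so are last letters. -/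
def MarkedSubst (H : A → List A) (hne : ∀ a, H a ≠ []) : Prop :=
  Function.Injective (fun a => (H a).head (hne a)) ∧
  Function.Injective (fun a => (H a).getLast (hne a))

/-- `H` is 2-full (with respect to the fixed point `u`): every word of length 2 belongs
to the language. -/
def TwoFull (H : A → List A) (u : ℕ → A) : Prop :=
  ∀ w : List A, w.length = 2 → w ∈ Lang u

/-- The attractor `K`: closure of the shift-orbit of the fixed point `u`. -/
def orbitClosure [TopologicalSpace A] (u : ℕ → A) : Set (ℕ → A) :=
  closure {y | ∃ n, y = shift^[n] u}

/-- `δ(x)`: the length of the maximal prefix of `x` belonging to the language of `u`. -/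
noncomputable def delta (u x : ℕ → A) : ℕ := sSup {n | prefixWord x n ∈ Lang u}

/-- The renormalization operator `R`. -/
noncomputable def renorm (H : A → List A) (V : (ℕ → A) → ℝ) : (ℕ → A) → ℝ :=
  fun x => ∑ i ∈ Finset.range (H (x 0)).length, V (shift^[i] (substSeq H x))

/-- `t_n(x) = |H^n(x₀)|`. -/
def tlen (H : A → List A) (n : ℕ) (x : ℕ → A) : ℕ := ((wordMap H)^[n] [x 0]).length

/-- An accident occurs at time `b`. -/
def AccidentAt (u x : ℕ → A) (b : ℕ) : Prop :=
  0 < b ∧ delta u x - b < delta u (shift^[b] x) ∧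
    ∀ i < b, delta u (shift^[i] x) = delta u x - i

/-- The first accident time of `x` (junk value `0` if there is none). -/
noncomputable def firstAccident (u x : ℕ → A) : ℕ := sInf {b | AccidentAt u x b}

/-- The `j`-th accident time `B_j` of `x`, defined inductively. -/
noncomputable def accidentTime (u x : ℕ → A) : ℕ → ℕ
  | 0 => 0
  | j + 1 => accidentTime u x j + firstAccident u (shift^[accidentTime u x j] x)

/-- The set of (genuine) accident times of `x`. -/
def AccidentSet (u x : ℕ → A) : Set ℕ :=
  {B | ∃ j : ℕ, B = accidentTime u x (j + 1) ∧
        AccidentAt u (shift^[accidentTime u x j] x)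
          (firstAccident u (shift^[accidentTime u x j] x))}

/-- A word is right special. -/
def RightSpecial (u : ℕ → A) (w : List A) : Prop :=
  ∃ b c : A, b ≠ c ∧ w ++ [b] ∈ Lang u ∧ w ++ [c] ∈ Lang u

/-- A word is left special. -/
def LeftSpecial (u : ℕ → A) (w : List A) : Prop :=
  ∃ a b : A, a ≠ b ∧ a :: w ∈ Lang u ∧ b :: w ∈ Lang u

/-- A word is bispecial. -/
def Bispecial (u : ℕ → A) (w : List A) : Prop := RightSpecial u w ∧ LeftSpecial u w

/-- `l` is a recognizability constant for `H`: every long enough word of the language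
admits a unique desubstitution. -/
def RecogBound (H : A → List A) (u : ℕ → A) (l : ℕ) : Prop :=
  ∀ z ∈ Lang u, l < z.length →
    ∃! d : List A × List A × List A,
      ∃ s p : A,
        z = d.1 ++ wordMap H d.2.1 ++ d.2.2 ∧
        d.2.1 ∈ Lang u ∧
        d.1 <:+ H s ∧ d.1.length < (H s).length ∧
        d.2.2 <+: H p ∧ d.2.2.length < (H p).length ∧
        ([s] ++ d.2.1 ++ [p]) ∈ Lang u

/-- The incidence matrix of a substitution, with real entries. -/
def incMat [Fintype A] [DecidableEq A] (H : A → List A) : Matrix A A ℝ :=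
  fun a b => ((H a).count b : ℝ)

/-- `lam` is the Perron–Frobenius eigenvalue of the incidence matrix of the (primitive)
substitution `H`: it admits an entrywise positive eigenvector. -/
def IsPerronValue [Fintype A] [DecidableEq A] (H : A → List A) (lam : ℝ) : Prop :=
  ∃ v : A → ℝ, (∀ a, 0 < v a) ∧ (incMat H).mulVec v = lam • v

/-- Concatenation of a finite word with an infinite word. -/
def catWord (S : List A) (y : ℕ → A) : ℕ → A :=
  fun n => S.getD n (y (n - S.length))

section AccidentAux

variable {H : A → List A} {u x : ℕ → A}

lemma shift_iterate_apply (x : ℕ → A) (j n : ℕ) : shift^[j] x n = x (j + n) := by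
  induction j generalizing n with
  | zero => simp
  | succ j ih =>
    rw [Function.iterate_succ_apply']
    show shift^[j] x (n + 1) = x (j + 1 + n)
    rw [ih]; congr 1; omega

lemma factorAt_length (u : ℕ → A) (i n : ℕ) : (factorAt u i n).length = n := by
  simp [factorAt]

lemma prefixWord_length (x : ℕ → A) (n : ℕ) : (prefixWord x n).length = n := by
  simp [prefixWord]

lemma factorAt_getElem (u : ℕ → A) (i n j : ℕ) (h : j < (factorAt u i n).length) :
    (factorAt u i n)[j] = u (i + j) := by
  simp [factorAt]

lemma prefixWord_getElem (u : ℕ → A) (n j : ℕ) (h : j < (prefixWord u n).length) :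
    (prefixWord u n)[j] = u j := by
  simp [prefixWord]

lemma eq_factorAt {u : ℕ → A} {w : List A} {i : ℕ}
    (h : ∀ j (hj : j < w.length), w[j] = u (i + j)) : w = factorAt u i w.length := by
  apply List.ext_getElem (by simp [factorAt])
  intro j h1 h2
  rw [factorAt_getElem u i _ j h2]
  exact h j h1

lemma factorAt_mem_Lang (u : ℕ → A) (i n : ℕ) : factorAt u i n ∈ Lang u :=
  ⟨i, by rw [factorAt_length]⟩

lemma factorAt_succ_cons (u : ℕ → A) (i n : ℕ) :
    factorAt u i (n + 1) = u i :: factorAt u (i + 1) n := by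
  apply List.ext_getElem (by simp [factorAt])
  intro j h1 h2
  rw [factorAt_getElem u i _ j h1]
  match j with
  | 0 => simp
  | j + 1 =>
    simp only [List.getElem_cons_succ]
    rw [factorAt_getElem]
    congr 1; omega

lemma factorAt_succ_append (u : ℕ → A) (i n : ℕ) :
    factorAt u i (n + 1) = factorAt u i n ++ [u (i + n)] := by
  simp [factorAt, List.range_succ]

lemma factorAt_take (u : ℕ → A) (i n m : ℕ) :
    (factorAt u i n).take m = factorAt u i (min m n) := by
  simp [factorAt, ← List.map_take, List.take_range]

lemma Lang.take {w : List A} (h : w ∈ Lang u) (m : ℕ) : w.take m ∈ Lang u := by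
  obtain ⟨i, hi⟩ := h
  rw [hi, factorAt_take]
  exact factorAt_mem_Lang u i _

lemma Lang.of_cons {a : A} {w : List A} (h : a :: w ∈ Lang u) : w ∈ Lang u := by
  obtain ⟨i, hi⟩ := h
  simp only [List.length_cons] at hi
  rw [factorAt_succ_cons] at hi
  exact ⟨i + 1, (List.cons.injEq _ _ _ _).mp hi |>.2⟩

lemma prefixWord_eq_factorAt (x : ℕ → A) (n : ℕ) : prefixWord x n = factorAt x 0 n := by
  simp [prefixWord, factorAt]

lemma prefixWord_shift (x : ℕ → A) (j n : ℕ) :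
    prefixWord (shift^[j] x) n = factorAt x j n := by
  apply List.ext_getElem (by simp [prefixWord, factorAt])
  intro m h1 h2
  rw [prefixWord_getElem _ _ _ h1, factorAt_getElem _ _ _ _ h2, shift_iterate_apply]

lemma zero_mem_langPrefixes (u x : ℕ → A) : prefixWord x 0 ∈ Lang u := by
  have : prefixWord x 0 = factorAt u 0 0 := by simp [prefixWord, factorAt]
  rw [this]; exact factorAt_mem_Lang u 0 0

lemma prefixWord_prefix (x : ℕ → A) {m n : ℕ} (h : m ≤ n) :
    prefixWord x m <+: prefixWord x n := by
  have : prefixWord x m = (prefixWord x n).take m := by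
    simp [prefixWord, ← List.map_take, List.take_range, Nat.min_eq_left h]
  rw [this]; exact List.take_prefix _ _

lemma bddAbove_of_delta_pos (h : 0 < delta u x) :
    BddAbove {n | prefixWord x n ∈ Lang u} := by
  by_contra hb
  rw [delta, csSup_of_not_bddAbove hb, csSup_empty] at h
  simp at h

lemma langPrefixes_downward {m n : ℕ} (hmn : m ≤ n) (h : prefixWord x n ∈ Lang u) :
    prefixWord x m ∈ Lang u := by
  have he : prefixWord x m = (prefixWord x n).take m := by
    simp [prefixWord, ← List.map_take, List.take_range, Nat.min_eq_left hmn]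
  rw [he]; exact Lang.take h m

/- wordMap lemmas -/

lemma wordMap_append (H : A → List A) (s t : List A) :
    wordMap H (s ++ t) = wordMap H s ++ wordMap H t := by
  simp [wordMap]

lemma wordMap_iter_append (H : A → List A) (k : ℕ) (s t : List A) :
    (wordMap H)^[k] (s ++ t) = (wordMap H)^[k] s ++ (wordMap H)^[k] t := by
  induction k generalizing s t with
  | zero => simp
  | succ k ih =>
    rw [Function.iterate_succ_apply, Function.iterate_succ_apply,
      Function.iterate_succ_apply, wordMap_append, ih]

lemma length_le_wordMap (hne : ∀ a, H a ≠ []) (w : List A) :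
    w.length ≤ (wordMap H w).length := by
  induction w with
  | nil => simp [wordMap]
  | cons a w ih =>
    have h1 : 1 ≤ (H a).length := List.length_pos_iff.mpr (hne a)
    have : wordMap H (a :: w) = H a ++ wordMap H w := by
      simp [wordMap]
    rw [this]
    simp only [List.length_cons, List.length_append]
    omega

lemma length_le_wordMap_iter (hne : ∀ a, H a ≠ []) (m : ℕ) (w : List A) :
    w.length ≤ ((wordMap H)^[m] w).length := by
  induction m with
  | zero => simp
  | succ m ih =>
    rw [Function.iterate_succ_apply']
    exact le_trans ih (length_le_wordMap hne _)

lemma two_le_length_of_two_mem {l : List A} {b c : A} (hb : b ∈ l) (hc : c ∈ l)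
    (hbc : b ≠ c) : 2 ≤ l.length := by
  match l with
  | [] => simp at hb
  | [a] =>
    simp at hb hc
    exact absurd (hb.trans hc.symm) hbc
  | a :: a' :: l => simp

lemma wordMap_iter_nil (H : A → List A) (k : ℕ) : (wordMap H)^[k] ([] : List A) = [] := by
  induction k with
  | zero => rfl
  | succ k ih => rw [Function.iterate_succ_apply', ih]; rfl

lemma two_mul_le_wordMap_iter (hne : ∀ a, H a ≠ []) {k : ℕ}
    (h2 : ∀ a : A, 2 ≤ ((wordMap H)^[k] [a]).length) (w : List A) :
    2 * w.length ≤ ((wordMap H)^[k] w).length := by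
  induction w with
  | nil => simp [wordMap_iter_nil]
  | cons a w ih =>
    have : (wordMap H)^[k] (a :: w) = (wordMap H)^[k] [a] ++ (wordMap H)^[k] w := by
      rw [← wordMap_iter_append]; rfl
    rw [this]
    have := h2 a
    simp only [List.length_cons, List.length_append]
    omega

lemma pow_le_wordMap_iter (hne : ∀ a, H a ≠ []) {k : ℕ}
    (h2 : ∀ a : A, 2 ≤ ((wordMap H)^[k] [a]).length) (a : A) (j : ℕ) :
    2 ^ j ≤ ((wordMap H)^[k * j] [a]).length := by
  induction j with
  | zero => simp
  | succ j ih =>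
    have hkj : k * (j + 1) = k + k * j := by ring
    rw [hkj, Function.iterate_add_apply]
    calc 2 ^ (j + 1) = 2 * 2 ^ j := by ring
    _ ≤ 2 * ((wordMap H)^[k * j] [a]).length := by omega
    _ ≤ _ := two_mul_le_wordMap_iter hne h2 _

/- substitution fixed point lemmas -/

lemma wordMap_prefix_mono {s t : List A} (h : s <+: t) :
    wordMap H s <+: wordMap H t := by
  obtain ⟨r, rfl⟩ := h
  rw [wordMap_append]
  exact List.prefix_append _ _

lemma fixedPrefix (hne : ∀ a, H a ≠ []) (hu : substSeq H u = u) (m n : ℕ)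
    (h : n < (wordMap H (prefixWord u m)).length) :
    (wordMap H (prefixWord u m))[n] = u n := by
  have hlen : n < (wordMap H (prefixWord u (n + 1))).length := by
    have := length_le_wordMap hne (prefixWord u (n + 1))
    rw [prefixWord_length] at this
    omega
  set M := max m (n + 1) with hM
  have h1 : wordMap H (prefixWord u m) <+: wordMap H (prefixWord u M) :=
    wordMap_prefix_mono (prefixWord_prefix u (le_max_left _ _))
  have h2 : wordMap H (prefixWord u (n + 1)) <+: wordMap H (prefixWord u M) :=
    wordMap_prefix_mono (prefixWord_prefix u (le_max_right _ _))
  rw [h1.getElem h, ← h2.getElem hlen, ← List.getD_eq_getElem _ (u 0) hlen]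
  have : (wordMap H (prefixWord u (n + 1))).getD n (u 0) = substSeq H u n := rfl
  rw [this, hu]

lemma wordMap_prefix_eq (hne : ∀ a, H a ≠ []) (hu : substSeq H u = u) (m : ℕ) :
    wordMap H (prefixWord u m) = prefixWord u (wordMap H (prefixWord u m)).length := by
  apply List.ext_getElem (by simp [prefixWord])
  intro n h1 h2
  rw [prefixWord_getElem _ _ _ h2]
  exact fixedPrefix hne hu m n h1

lemma iter_prefix_eq (hne : ∀ a, H a ≠ []) (hu : substSeq H u = u) (m j : ℕ) :
    (wordMap H)^[m] (prefixWord u j)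
      = prefixWord u ((wordMap H)^[m] (prefixWord u j)).length := by
  induction m with
  | zero => simp [prefixWord_length]
  | succ m ih =>
    rw [Function.iterate_succ_apply', ih]
    exact wordMap_prefix_eq hne hu _

lemma prefixWord_drop (u : ℕ → A) (L c : ℕ) :
    (prefixWord u L).drop c = factorAt u c (L - c) := by
  apply List.ext_getElem (by simp [prefixWord, factorAt])
  intro j h1 h2
  simp [prefixWord, factorAt]

/-- Recurrence: every word of the language occurs at a positive position. -/
lemma exists_pos_occ [Fintype A] (hne : ∀ a, H a ≠ []) (hprim : PrimitiveSubst H)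
    (hD : 2 ≤ Fintype.card A) (hu : substSeq H u = u)
    {v : List A} (hv : v ∈ Lang u) : ∃ i, 0 < i ∧ v = factorAt u i v.length := by
  obtain ⟨i0, hi0⟩ := hv
  obtain ⟨k, hk, hall⟩ := hprim
  have h2len : ∀ a : A, 2 ≤ ((wordMap H)^[k] [a]).length := by
    intro a
    obtain ⟨b, c, hbc⟩ : ∃ b c : A, b ≠ c := Fintype.exists_pair_of_one_lt_card (by omega)
    exact two_le_length_of_two_mem (hall a b) (hall a c) hbc
  obtain ⟨j, hj⟩ : ∃ j, i0 + v.length < 2 ^ j := ⟨_, Nat.lt_two_pow_self⟩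
  set m := k * j with hm
  have hone : prefixWord u 1 = [u 0] := by simp [prefixWord, List.range_succ]
  set P := (wordMap H)^[m] [u 0] with hP
  have hPpref : P = prefixWord u P.length := by
    rw [hP, ← hone]
    exact iter_prefix_eq hne hu m 1
  have hPlen : i0 + v.length ≤ P.length := by
    have := pow_le_wordMap_iter hne h2len (u 0) j
    rw [← hm, ← hP] at this
    omega
  have hmem : u 0 ∈ (wordMap H)^[k] [u 1] := hall (u 1) (u 0)
  obtain ⟨s, t, hst⟩ := List.append_of_mem hmem
  have hC : (wordMap H)^[m + k] [u 1]
      = ((wordMap H)^[m] s ++ P) ++ (wordMap H)^[m] t := by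
    rw [Function.iterate_add_apply, hst,
      show s ++ u 0 :: t = (s ++ [u 0]) ++ t by simp,
      wordMap_iter_append, wordMap_iter_append]
  have htwo : prefixWord u 2 = [u 0] ++ [u 1] := by
    simp [prefixWord, List.range_succ]
  set W := (wordMap H)^[m + k] (prefixWord u 2) with hW
  set L := W.length with hL
  have hbig : W = prefixWord u L := iter_prefix_eq hne hu (m + k) 2
  set Q := (wordMap H)^[m + k] [u 0] with hQ
  have hQ1 : 1 ≤ Q.length := by
    have := length_le_wordMap_iter hne (m + k) [u 0]
    simpa using this
  set c := (Q ++ (wordMap H)^[m] s).length with hc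
  have hLP : prefixWord u L = (Q ++ (wordMap H)^[m] s) ++ (P ++ (wordMap H)^[m] t) := by
    rw [← hbig, hW, htwo, wordMap_iter_append, ← hQ, hC]
    simp [List.append_assoc]
  have hcP : c + P.length ≤ L := by
    have h5 := congrArg List.length hLP
    simp only [prefixWord_length, List.length_append] at h5
    rw [hc]
    simp only [List.length_append]
    omega
  have hPocc : P = factorAt u c P.length := by
    have h4 : ((prefixWord u L).drop c).take P.length = P := by
      rw [hLP, hc, List.drop_left, List.take_left]
    rw [prefixWord_drop, factorAt_take, Nat.min_eq_left (by omega)] at h4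
    exact h4.symm
  have hper : ∀ r, r < P.length → u (c + r) = u r := by
    intro r hr
    have e1 : P[r]'(by omega) = u (c + r) := by
      rw [List.getElem_of_eq hPocc, factorAt_getElem]
    have e2 : P[r]'(by omega) = u r := by
      rw [List.getElem_of_eq hPpref, prefixWord_getElem]
    rw [← e1, e2]
  have hc1 : 1 ≤ c := by
    rw [hc]; simp only [List.length_append]; omega
  refine ⟨c + i0, by omega, ?_⟩
  apply eq_factorAt
  intro q hq
  rw [List.getElem_of_eq hi0, factorAt_getElem]
  have := hper (i0 + q) (by omega)
  rw [show c + i0 + q = c + (i0 + q) by omega]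
  exact this.symm

lemma delta_mem (h : 0 < delta u x) : prefixWord x (delta u x) ∈ Lang u := by
  have : delta u x ∈ {n | prefixWord x n ∈ Lang u} :=
    Nat.sSup_mem ⟨0, zero_mem_langPrefixes u x⟩ (bddAbove_of_delta_pos h)
  exact this

lemma le_delta (hpos : 0 < delta u x) {q : ℕ} (h : prefixWord x q ∈ Lang u) :
    q ≤ delta u x :=
  le_csSup (bddAbove_of_delta_pos hpos) h

lemma prefix_mem_of_le_delta (hpos : 0 < delta u x) {q : ℕ} (h : q ≤ delta u x) :
    prefixWord x q ∈ Lang u :=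
  langPrefixes_downward h (delta_mem hpos)

lemma not_mem_of_delta_lt (hpos : 0 < delta u x) {q : ℕ} (h : delta u x < q) :
    prefixWord x q ∉ Lang u :=
  fun hq => absurd (le_delta hpos hq) (by omega)

end AccidentAux

/-- If the first accident of `x ∉ K` occurs at time `b` with
`0 < b ≤ d = δ(x)`, then the word `x_b ⋯ x_{d-1}` is bispecial. -/
theorem accident_bispecial
    {A : Type*} [Fintype A] [DecidableEq A] [TopologicalSpace A] [DiscreteTopology A]
    (hD : 2 ≤ Fintype.card A)
    (H : A → List A) (hne : ∀ a, H a ≠ [])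
    (hprim : PrimitiveSubst H) (haper : AperiodicSubst H)
    (u : ℕ → A) (hu : IsFixedPointSubst H u)
    (x : ℕ → A) (hx : x ∉ orbitClosure u)
    (d b : ℕ) (hd : delta u x = d)
    (hacc : AccidentAt u x b) (hbd : b ≤ d) :
    Bispecial u (factorAt x b (d - b)) := by
  obtain ⟨hb0, hlt, hall⟩ := hacc
  set n := d - b with hn
  have hbn : b + n = d := by omega
  have h1 : delta u (shift^[b - 1] x) = n + 1 := by
    rw [hall (b - 1) (by omega), hd]; omega
  have h2 : n + 1 ≤ delta u (shift^[b] x) := by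
    have h3 : delta u x - b < delta u (shift^[b] x) := hlt
    rw [hd] at h3; omega
  -- the three language facts
  have P1 : factorAt x (b - 1) (n + 1) ∈ Lang u := by
    rw [← prefixWord_shift]
    exact prefix_mem_of_le_delta (by rw [h1]; omega) (le_of_eq h1.symm)
  have C : factorAt x (b - 1) ((n + 1) + 1) ∉ Lang u := by
    rw [← prefixWord_shift]
    exact not_mem_of_delta_lt (by rw [h1]; omega) (by rw [h1]; omega)
  have P3 : factorAt x b (n + 1) ∈ Lang u := by
    rw [← prefixWord_shift]
    exact prefix_mem_of_le_delta (by omega) h2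
  have hb1 : b - 1 + 1 = b := by omega
  have P1' : x (b - 1) :: factorAt x b n ∈ Lang u := by
    rw [factorAt_succ_cons, hb1] at P1; exact P1
  have C' : x (b - 1) :: (factorAt x b n ++ [x d]) ∉ Lang u := by
    rw [factorAt_succ_cons, hb1, factorAt_succ_append, hbn] at C
    exact C
  have P3' : factorAt x b n ++ [x d] ∈ Lang u := by
    rw [factorAt_succ_append, hbn] at P3; exact P3
  -- right special
  obtain ⟨i, hi⟩ := P1'
  have hlen : (x (b - 1) :: factorAt x b n).length = n + 1 := by
    simp [factorAt_length]
  rw [hlen] at hi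
  set cl := u (i + (n + 1)) with hcl
  have hext : factorAt u i ((n + 1) + 1) = (x (b - 1) :: factorAt x b n) ++ [cl] := by
    rw [factorAt_succ_append, ← hi]
  have hclmem : x (b - 1) :: (factorAt x b n ++ [cl]) ∈ Lang u := by
    have hm := factorAt_mem_Lang u i ((n + 1) + 1)
    rw [hext] at hm
    simpa [List.cons_append] using hm
  have P1'' : x (b - 1) :: factorAt x b n ∈ Lang u := ⟨i, by rw [hlen]; exact hi⟩
  have hcl2 : factorAt x b n ++ [cl] ∈ Lang u := Lang.of_cons hclmem
  have hclne : x d ≠ cl := by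
    intro h
    apply C'
    rwa [← h] at hclmem
  have right : RightSpecial u (factorAt x b n) := ⟨x d, cl, hclne, P3', hcl2⟩
  -- left special
  obtain ⟨i2, hi2pos, hocc⟩ := exists_pos_occ hne hprim hD hu P3'
  have hlen2 : (factorAt x b n ++ [x d]).length = n + 1 := by simp [factorAt_length]
  rw [hlen2] at hocc
  have hi21 : i2 - 1 + 1 = i2 := by omega
  set a := u (i2 - 1) with ha
  have hext2 : factorAt u (i2 - 1) ((n + 1) + 1) = a :: (factorAt x b n ++ [x d]) := by
    rw [factorAt_succ_cons, hi21, ← hocc]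
  have hamem : a :: (factorAt x b n ++ [x d]) ∈ Lang u := by
    have hm := factorAt_mem_Lang u (i2 - 1) ((n + 1) + 1)
    rwa [hext2] at hm
  have hane : a ≠ x (b - 1) := by
    intro h
    apply C'
    rwa [h] at hamem
  have haw : a :: factorAt x b n ∈ Lang u := by
    have hm := Lang.take hamem (n + 1)
    have he : (a :: (factorAt x b n ++ [x d])).take (n + 1) = a :: factorAt x b n := by
      rw [List.take_succ_cons, List.take_left' (factorAt_length x b n)]
    rwa [he] at hm
  have left : LeftSpecial u (factorAt x b n) := ⟨a, x (b - 1), hane, haw, P1''⟩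
  exact ⟨right, left⟩
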